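/- Let A, B be bounded linear operators on a complex Hilbert space H, let x ∈ H be a unit vector, let r ≥ 1 be real, and let f : [0,∞) → ℝ be increasing and convex. Then f(|⟨Ax,x⟩⟨Bx,x⟩|) ≤ (1/2) f(|⟨BAx,x⟩|) + (1/4)(f(‖Ax‖²) + f(‖B*x‖²)). -/

import Mathlib

open scoped InnerProductSpace
open RCLike

lemma buzano_aux {H : Type*} [NormedAddCommGroup H] [InnerProductSpace ℂ H]
    (e u v : H) (he : ‖e‖ = 1) :
    ‖⟪u, e⟫_ℂ * ⟪e, v⟫_ℂ‖ ≤ (‖⟪u, v⟫_ℂ‖ + ‖u‖ * ‖v‖) / 2 := by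
  set w : H := (2 : ℂ) • (⟪e, u⟫_ℂ • e) - u with hw
  have hwn : ‖w‖ = ‖u‖ := by
    have h1 : ‖w‖ ^ 2 = ‖u‖ ^ 2 := by
      rw [hw, @norm_sub_sq ℂ]
      have hip : ⟪(2 : ℂ) • (⟪e, u⟫_ℂ • e), u⟫_ℂ = 2 * (starRingEnd ℂ ⟪e, u⟫_ℂ * ⟪e, u⟫_ℂ) := by
        simp [inner_smul_left, mul_assoc, Complex.conj_ofNat]; ring
      have hnorm : ‖(2 : ℂ) • (⟪e, u⟫_ℂ • e)‖ ^ 2 = 4 * ‖⟪e, u⟫_ℂ‖ ^ 2 := by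
        rw [norm_smul, norm_smul, he]
        simp; ring
      rw [hip, hnorm]
      have : re (2 * (starRingEnd ℂ ⟪e, u⟫_ℂ * ⟪e, u⟫_ℂ)) = 2 * ‖⟪e, u⟫_ℂ‖ ^ 2 := by
        rw [RCLike.conj_mul]
        simp [RCLike.normSq_eq_def', ← Complex.ofReal_pow]
      rw [this]; ring
    have h2 := congrArg Real.sqrt h1
    rwa [Real.sqrt_sq (norm_nonneg w), Real.sqrt_sq (norm_nonneg u)] at h2
  have hdecomp : (2 : ℂ) * (⟪u, e⟫_ℂ * ⟪e, v⟫_ℂ) = ⟪w, v⟫_ℂ + ⟪u, v⟫_ℂ := by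
    simp only [hw, inner_sub_left, inner_smul_left, inner_conj_symm, Complex.conj_ofNat]
    ring
  have h2 : ‖(2 : ℂ) * (⟪u, e⟫_ℂ * ⟪e, v⟫_ℂ)‖ ≤ ‖⟪u, v⟫_ℂ‖ + ‖u‖ * ‖v‖ := by
    rw [hdecomp]
    calc ‖⟪w, v⟫_ℂ + ⟪u, v⟫_ℂ‖ ≤ ‖⟪w, v⟫_ℂ‖ + ‖⟪u, v⟫_ℂ‖ := norm_add_le _ _
      _ ≤ ‖w‖ * ‖v‖ + ‖⟪u, v⟫_ℂ‖ := by
          gcongr; exact norm_inner_le_norm w v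
      _ = ‖⟪u, v⟫_ℂ‖ + ‖u‖ * ‖v‖ := by rw [hwn]; ring
  rw [norm_mul] at h2
  simp only [Complex.norm_ofNat] at h2
  linarith

theorem stmt_4 {H : Type*} [NormedAddCommGroup H] [InnerProductSpace ℂ H] [CompleteSpace H]
    (A B : H →L[ℂ] H) (x : H) (hx : ‖x‖ = 1) (r : ℝ) (hr : 1 ≤ r)
    (f : ℝ → ℝ) (hf_mono : MonotoneOn f (Set.Ici 0))
    (hf_conv : ConvexOn ℝ (Set.Ici 0) f) :
    f (‖⟪A x, x⟫_ℂ * ⟪B x, x⟫_ℂ‖) ≤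
      (1 / 2) * f (‖⟪B (A x), x⟫_ℂ‖) +
        (1 / 4) * (f (‖A x‖ ^ 2) + f (‖(ContinuousLinearMap.adjoint B) x‖ ^ 2)) := by
  set u := A x
  set v := (ContinuousLinearMap.adjoint B) x with hv
  have hBx : ⟪B x, x⟫_ℂ = ⟪x, v⟫_ℂ := by
    rw [hv, ContinuousLinearMap.adjoint_inner_right, ← inner_conj_symm, inner_conj_symm]
  have hBA : ⟪B (A x), x⟫_ℂ = ⟪u, v⟫_ℂ := by
    rw [hv, ContinuousLinearMap.adjoint_inner_right]
  -- Buzano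
  have hbuz : ‖⟪A x, x⟫_ℂ * ⟪B x, x⟫_ℂ‖ ≤ (‖⟪u, v⟫_ℂ‖ + ‖u‖ * ‖v‖) / 2 := by
    rw [hBx]
    exact buzano_aux x u v hx
  set a := ‖⟪u, v⟫_ℂ‖ with ha
  set b := ‖u‖ * ‖v‖ with hb
  have ha0 : 0 ≤ a := norm_nonneg _
  have hb0 : 0 ≤ b := mul_nonneg (norm_nonneg _) (norm_nonneg _)
  have hc0 : (0:ℝ) ≤ ‖u‖ ^ 2 := sq_nonneg _
  have hd0 : (0:ℝ) ≤ ‖v‖ ^ 2 := sq_nonneg _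
  have hbcd : b ≤ (‖u‖ ^ 2 + ‖v‖ ^ 2) / 2 := by
    nlinarith [sq_nonneg (‖u‖ - ‖v‖)]
  have step1 : f (‖⟪A x, x⟫_ℂ * ⟪B x, x⟫_ℂ‖) ≤ f ((a + b) / 2) :=
    hf_mono (Set.mem_Ici.mpr (norm_nonneg _))
      (Set.mem_Ici.mpr (by positivity)) hbuz
  have step2 : f ((a + b) / 2) ≤ (1/2) * f a + (1/2) * f b := by
    have hc := hf_conv.2 (Set.mem_Ici.mpr ha0) (Set.mem_Ici.mpr hb0)
      (by norm_num : (0:ℝ) ≤ (1:ℝ)/2) (by norm_num : (0:ℝ) ≤ (1:ℝ)/2) (by norm_num)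
    have heq : (a + b) / 2 = (1/2:ℝ) • a + (1/2:ℝ) • b := by
      simp [smul_eq_mul]; ring
    rw [heq]
    simpa [smul_eq_mul] using hc
  have step3 : f b ≤ (1/2) * f (‖u‖ ^ 2) + (1/2) * f (‖v‖ ^ 2) := by
    have hmono := hf_mono (Set.mem_Ici.mpr hb0)
      (Set.mem_Ici.mpr (by positivity)) hbcd
    have hconv := hf_conv.2 (Set.mem_Ici.mpr hc0) (Set.mem_Ici.mpr hd0)
      (by norm_num : (0:ℝ) ≤ (1:ℝ)/2) (by norm_num : (0:ℝ) ≤ (1:ℝ)/2) (by norm_num)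
    have heq : (‖u‖^2 + ‖v‖^2) / 2 = (1/2:ℝ) • ‖u‖^2 + (1/2:ℝ) • ‖v‖^2 := by
      simp [smul_eq_mul]; ring
    calc f b ≤ f ((‖u‖^2 + ‖v‖^2)/2) := hmono
      _ ≤ (1/2) * f (‖u‖^2) + (1/2) * f (‖v‖^2) := by
          rw [heq]; simpa [smul_eq_mul] using hconv
  have hBA' : f (‖⟪B (A x), x⟫_ℂ‖) = f a := by rw [ha, hBA]
  rw [hBA']
  linarith
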